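/- arXiv:1108.0632 — 2 statements merged into one kernel-verified Lean document; each statement's English description precedes it below -/
import Mathlib

section
/- Let K be a convex subset of ℝ^k and f : K → ℝ a concave function. If f is affine on each of two line segments S₁ = [v, v + λ₁ b₁] and S₂ = [m, m + λ₂ b₂] where m is the midpoint of S₁, λ₁, λ₂ > 0, and moreover f is affine on the union S₁ ∪ S₂, then f is affine on the convex hull of S₁ ∪ S₂. -/
/-- `f` agrees on `S` with an affine function `x ↦ ⟨a, x⟩ + c`. -/
def IsAffineOnSet {k : ℕ} (f : (Fin k → ℝ) → ℝ) (S : Set (Fin k → ℝ)) : Prop :=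
  ∃ (a : Fin k → ℝ) (c : ℝ), ∀ x ∈ S, f x = (∑ i, a i * x i) + c

theorem concave_affine_on_T_implies_affine_on_convexHull
    (k : ℕ) (K : Set (Fin k → ℝ)) (hK : Convex ℝ K)
    (f : (Fin k → ℝ) → ℝ) (hf : ConcaveOn ℝ K f)
    (v b₁ b₂ : Fin k → ℝ) (l₁ l₂ : ℝ) (hl₁ : 0 < l₁) (hl₂ : 0 < l₂)
    (hb₁ : ∑ i, b₁ i * b₁ i = 1) (hb₂ : ∑ i, b₂ i * b₂ i = 1)
    (hb₁₂ : ∑ i, b₁ i * b₂ i = 0)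
    (S₁ : Set (Fin k → ℝ)) (hS₁ : S₁ = segment ℝ v (v + l₁ • b₁))
    (m : Fin k → ℝ) (hm : m = v + (l₁ / 2) • b₁)
    (S₂ : Set (Fin k → ℝ)) (hS₂ : S₂ = segment ℝ m (m + l₂ • b₂))
    (hsub : S₁ ∪ S₂ ⊆ K)
    (haff₁ : IsAffineOnSet f S₁) (haff₂ : IsAffineOnSet f S₂)
    (haff : IsAffineOnSet f (S₁ ∪ S₂)) :
    IsAffineOnSet f (convexHull ℝ (S₁ ∪ S₂)) := by
  classical
  obtain ⟨a, c, hg⟩ := haff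
  refine ⟨a, c, ?_⟩
  set g : (Fin k → ℝ) → ℝ := fun x => (∑ i, a i * x i) + c with hgdef
  -- g is affine
  have hgaff : ∀ (t s : ℝ) (x y : Fin k → ℝ), t + s = 1 →
      g (t • x + s • y) = t * g x + s * g y := by
    intro t s x y hts
    simp only [hgdef, Pi.add_apply, Pi.smul_apply, smul_eq_mul]
    have h1 : ∑ i, a i * (t * x i + s * y i)
        = t * ∑ i, a i * x i + s * ∑ i, a i * y i := by
      rw [Finset.mul_sum, Finset.mul_sum, ← Finset.sum_add_distrib]
      exact Finset.sum_congr rfl fun i _ => by ring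
    rw [h1]; linear_combination (-c) * hts
  have hKh : convexHull ℝ (S₁ ∪ S₂) ⊆ K := convexHull_min hsub hK
  -- hull = convexJoin S₁ S₂
  have hconv₁ : Convex ℝ S₁ := hS₁ ▸ convex_segment _ _
  have hconv₂ : Convex ℝ S₂ := hS₂ ▸ convex_segment _ _
  have hne₁ : S₁.Nonempty := ⟨v, hS₁ ▸ left_mem_segment ℝ _ _⟩
  have hne₂ : S₂.Nonempty := ⟨m, hS₂ ▸ left_mem_segment ℝ _ _⟩
  have hjoin : convexHull ℝ (S₁ ∪ S₂) = convexJoin ℝ S₁ S₂ :=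
    hconv₁.convexHull_union hconv₂ hne₁ hne₂
  intro p hp
  show f p = g p
  have hpK : p ∈ K := hKh hp
  rw [hjoin, mem_convexJoin] at hp
  obtain ⟨x₁, hx₁S, x₂, hx₂S, u, u', hu, hu', huu, hpeq⟩ := hp
  have hu'eq : u' = 1 - u := by linarith
  subst hu'eq
  have hu1 : u ≤ 1 := by linarith
  -- coordinates of x₁ and x₂
  have hx₁ := hx₁S
  rw [hS₁, segment_eq_image' ℝ] at hx₁
  obtain ⟨r, ⟨hr0, hr1⟩, hx₁eq⟩ := hx₁
  have hx₁eq' : v + r • (v + l₁ • b₁ - v) = x₁ := hx₁eq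
  have hx₂ := hx₂S
  rw [hS₂, segment_eq_image' ℝ] at hx₂
  obtain ⟨q, ⟨hq0, hq1⟩, hx₂eq⟩ := hx₂
  have hx₂eq' : m + q • (m + l₂ • b₂ - m) = x₂ := hx₂eq
  have hx₁' : x₁ = v + (r * l₁) • b₁ := by rw [← hx₁eq']; module
  have hx₂' : x₂ = v + (l₁ / 2) • b₁ + (q * l₂) • b₂ := by
    rw [← hx₂eq', hm]; module
  have hx₁K : x₁ ∈ K := hsub (Set.mem_union_left _ hx₁S)
  have hx₂K : x₂ ∈ K := hsub (Set.mem_union_right _ hx₂S)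
  have hfx₁ : f x₁ = g x₁ := hg x₁ (Set.mem_union_left _ hx₁S)
  have hfx₂ : f x₂ = g x₂ := hg x₂ (Set.mem_union_right _ hx₂S)
  -- lower bound: g p ≤ f p from concavity
  have hlow : g p ≤ f p := by
    have hconc := hf.2 hx₁K hx₂K hu hu' huu
    rw [hpeq] at hconc
    simp only [smul_eq_mul] at hconc
    rw [hfx₁, hfx₂] at hconc
    have hgp : g p = u * g x₁ + (1 - u) * g x₂ := by
      rw [← hpeq]; exact hgaff u (1 - u) x₁ x₂ huu
    rw [hgp]; exact hconc
  -- p in coordinates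
  have hp' : p = v + ((u * r + (1 - u) / 2) * l₁) • b₁ + (((1 - u) * q) * l₂) • b₂ := by
    rw [← hpeq, hx₁', hx₂']
    match_scalars <;> ring
  -- upper bound
  set ρ : ℝ := u * r + (1 - u) / 2 with hρ
  clear_value ρ
  have hρ0 : 0 ≤ ρ := by rw [hρ]; nlinarith
  have hρ1 : ρ ≤ 1 := by rw [hρ]; nlinarith
  have hupper : f p ≤ g p := by
    rcases le_or_gt ρ (1/2) with hcase | hcase
    · -- use B = v + l₁ • b₁
      set t : ℝ := 1 / (2 - 2 * ρ) with ht
      clear_value t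
      have hden : (0:ℝ) < 2 - 2 * ρ := by linarith
      have hden' : (2 - 2 * ρ : ℝ) ≠ 0 := ne_of_gt hden
      have ht0 : 0 < t := by rw [ht]; positivity
      have ht1 : t ≤ 1 := by rw [ht, div_le_one hden]; linarith
      set s : Fin k → ℝ := t • p + (1 - t) • (v + l₁ • b₁) with hs
      have hθ0 : 0 ≤ t * ((1 - u) * q) := by positivity
      have hθ1 : t * ((1 - u) * q) ≤ 1 := by
        rw [ht, div_mul_eq_mul_div, div_le_one hden]
        rw [hρ]; nlinarith
      have hseq : s = m + (t * ((1 - u) * q)) • ((m + l₂ • b₂) - m) := by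
        rw [hs, hp', hm]
        match_scalars <;> simp only [ht] <;> field_simp [show (1:ℝ) - ρ ≠ 0 by linarith] <;> ring
      have hsS₂ : s ∈ S₂ := by
        rw [hS₂, segment_eq_image' ℝ]
        exact ⟨t * ((1 - u) * q), ⟨hθ0, hθ1⟩, hseq.symm⟩
      have hBS : v + l₁ • b₁ ∈ S₁ := hS₁ ▸ right_mem_segment ℝ _ _
      have hBK : v + l₁ • b₁ ∈ K := hsub (Set.mem_union_left _ hBS)
      have hfB : f (v + l₁ • b₁) = g (v + l₁ • b₁) :=
        hg _ (Set.mem_union_left _ hBS)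
      have hfs : f s = g s := hg s (Set.mem_union_right _ hsS₂)
      have h1t : (0:ℝ) ≤ 1 - t := by linarith
      have htt : t + (1 - t) = 1 := by ring
      have hconc := hf.2 hpK hBK (le_of_lt ht0) h1t htt
      rw [← hs] at hconc
      have hgs : g s = t * g p + (1 - t) * g (v + l₁ • b₁) := by
        rw [hs]; exact hgaff t (1 - t) _ _ (by ring)
      simp only [smul_eq_mul] at hconc
      rw [hfs, hgs, hfB] at hconc
      have hfin : t * f p ≤ t * g p := by linarith
      exact le_of_mul_le_mul_left hfin ht0
    · -- use A = v
      set t : ℝ := 1 / (2 * ρ) with ht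
      clear_value t
      have hden : (0:ℝ) < 2 * ρ := by linarith
      have hden' : (2 * ρ : ℝ) ≠ 0 := ne_of_gt hden
      have ht0 : 0 < t := by rw [ht]; positivity
      have ht1 : t ≤ 1 := by rw [ht, div_le_one hden]; linarith
      set s : Fin k → ℝ := t • p + (1 - t) • v with hs
      have hθ0 : 0 ≤ t * ((1 - u) * q) := by positivity
      have hθ1 : t * ((1 - u) * q) ≤ 1 := by
        rw [ht, div_mul_eq_mul_div, div_le_one hden]
        rw [hρ]; nlinarith
      have hseq : s = m + (t * ((1 - u) * q)) • ((m + l₂ • b₂) - m) := by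
        rw [hs, hp', hm]
        match_scalars <;> simp only [ht] <;> field_simp <;> ring
      have hsS₂ : s ∈ S₂ := by
        rw [hS₂, segment_eq_image' ℝ]
        exact ⟨t * ((1 - u) * q), ⟨hθ0, hθ1⟩, hseq.symm⟩
      have hvS : v ∈ S₁ := hS₁ ▸ left_mem_segment ℝ _ _
      have hvK : v ∈ K := hsub (Set.mem_union_left _ hvS)
      have hfv : f v = g v := hg _ (Set.mem_union_left _ hvS)
      have hfs : f s = g s := hg s (Set.mem_union_right _ hsS₂)
      have h1t : (0:ℝ) ≤ 1 - t := by linarith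
      have htt : t + (1 - t) = 1 := by ring
      have hconc := hf.2 hpK hvK (le_of_lt ht0) h1t htt
      rw [← hs] at hconc
      have hgs : g s = t * g p + (1 - t) * g v := by
        rw [hs]; exact hgaff t (1 - t) _ _ (by ring)
      simp only [smul_eq_mul] at hconc
      rw [hfs, hgs, hfv] at hconc
      have hfin : t * f p ≤ t * g p := by linarith
      exact le_of_mul_le_mul_left hfin ht0
  exact le_antisymm hupper hlow
end

section
/- Let P ⊆ ℝ^k be a convex set, f : P → ℝ_{≥0} a non-negative concave function, and let V ⊆ P be the set of points v such that for every line segment S ⊆ P containing v, the point (v, f(v)) is an extremal point of Q_S = {(x, y) : x ∈ S, 0 ≤ y ≤ f(x)}. If Q := {(x, y) : x ∈ P, 0 ≤ y ≤ f(x)} is compact and convex, then every extremal point of Q lies in the set {(v, f(v)) : v ∈ V} ∪ (P × {0}). -/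
lemma extremePoints_subset_of_subset {E : Type*} [AddCommGroup E] [Module ℝ E]
    {A B : Set E} (hAB : A ⊆ B) {p : E} (hpA : p ∈ A)
    (hp : p ∈ Set.extremePoints ℝ B) : p ∈ Set.extremePoints ℝ A := by
  rw [mem_extremePoints] at hp ⊢
  exact ⟨hpA, fun x hx y hy hxy => hp.2 x (hAB hx) y (hAB hy) hxy⟩

theorem extreme_points_of_fibered_body
    (k : ℕ) (P : Set (Fin k → ℝ)) (hP : Convex ℝ P)
    (f : (Fin k → ℝ) → ℝ) (hf0 : ∀ x ∈ P, 0 ≤ f x)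
    (hconc : ConcaveOn ℝ P f)
    (V : Set (Fin k → ℝ))
    (hV : V = {v ∈ P | ∀ a ∈ P, ∀ b ∈ P, v ∈ segment ℝ a b →
      (v, f v) ∈ Set.extremePoints ℝ
        {p : (Fin k → ℝ) × ℝ | p.1 ∈ segment ℝ a b ∧ 0 ≤ p.2 ∧ p.2 ≤ f p.1}})
    (Q : Set ((Fin k → ℝ) × ℝ))
    (hQ : Q = {p : (Fin k → ℝ) × ℝ | p.1 ∈ P ∧ 0 ≤ p.2 ∧ p.2 ≤ f p.1})
    (hQc : IsCompact Q) (hQconv : Convex ℝ Q) :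
    Set.extremePoints ℝ Q ⊆
      {p : (Fin k → ℝ) × ℝ | ∃ v ∈ V, p = (v, f v)} ∪
      {p : (Fin k → ℝ) × ℝ | p.1 ∈ P ∧ p.2 = 0} := by
  rintro ⟨x, y⟩ hp
  have hpmem := hp.1
  rw [hQ] at hpmem
  obtain ⟨hxP, hy0, hyf⟩ := hpmem
  rcases eq_or_lt_of_le hy0 with h0 | h0
  · exact Or.inr ⟨hxP, h0.symm⟩
  -- y > 0 ; show y = f x
  have hfx : 0 < f x := lt_of_lt_of_le h0 hyf
  have hyfx : y = f x := by
    by_contra hne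
    have hylt : y < f x := lt_of_le_of_ne hyf hne
    have hxm : (x, y) ∈ openSegment ℝ ((x, 0) : (Fin k → ℝ) × ℝ) (x, f x) := by
      refine ⟨1 - y / f x, y / f x, ?_, ?_, by ring, ?_⟩
      · have : y / f x < 1 := (div_lt_one hfx).2 hylt
        linarith
      · exact div_pos h0 hfx
      · have h1 : (1 - y / f x) • ((x, 0) : (Fin k → ℝ) × ℝ) + (y / f x) • (x, f x)
            = ((1 - y / f x) • x + (y / f x) • x, (1 - y / f x) * 0 + (y / f x) * f x) := rfl
        rw [h1, ← add_smul]
        have h2 : (1 - y / f x) + y / f x = 1 := by ring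
        rw [h2, one_smul]
        have h3 : (1 - y / f x) * 0 + (y / f x) * f x = y := by
          field_simp
          ring
        rw [h3]
    have hmQ1 : ((x, 0) : (Fin k → ℝ) × ℝ) ∈ Q := by
      rw [hQ]; exact ⟨hxP, le_refl 0, hf0 x hxP⟩
    have hmQ2 : ((x, f x) : (Fin k → ℝ) × ℝ) ∈ Q := by
      rw [hQ]; exact ⟨hxP, le_of_lt hfx, le_refl _⟩
    have := hp.2 hmQ1 hmQ2 hxm
    have := congrArg Prod.snd this
    simp at this
    exact absurd this.symm (ne_of_gt h0)
  subst hyfx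
  left
  refine ⟨x, ?_, rfl⟩
  rw [hV]
  refine ⟨hxP, fun a ha b hb hxab => ?_⟩
  refine extremePoints_subset_of_subset ?_ ⟨hxab, hy0, le_refl _⟩ hp
  intro q hq
  rw [hQ]
  exact ⟨hP.segment_subset ha hb hq.1, hq.2⟩
end
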